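/- For all integers n ≥ 1, c_2(n) = (1/2)·2^n − (2/3)·2^n·(3/4)^(⌊(n-1)/2⌋ + 1), and consequently c_2(n) ≥ (1/2)·2^n − (4√3/9)·(√3)^n. -/
import Mathlib


open scoped Classical

/-- `primeWeight t n` : sum over partitions of `n` into `t` distinct positive parts
`p 0 > p 1 > ⋯ > p (t-1) ≥ 1` of `(1/(t(t+1))) ∏_{i=1}^{t} ((i+1)/i)^{p_i}`. -/
noncomputable def primeWeight (t n : ℕ) : ℝ :=
  ∑ p ∈ (Fintype.piFinset (fun _ : Fin t => Finset.range (n + 1))).filter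
      (fun p => (∀ i j : Fin t, i < j → p j < p i) ∧ (∀ i, 1 ≤ p i) ∧
        ∑ i, p i = n),
    (1 / ((t : ℝ) * ((t : ℝ) + 1))) *
      ∏ i : Fin t, ((((i : ℕ) : ℝ) + 2) / (((i : ℕ) : ℝ) + 1)) ^ p i

theorem key (n : ℕ) (hn : 1 ≤ n) :
    primeWeight 2 n =
      (1 / 2) * 2 ^ n - (2 / 3) * 2 ^ n * (3 / 4 : ℝ) ^ ((n - 1) / 2 + 1) := by
  unfold primeWeight
  set m := (n - 1) / 2 with hm
  have hbij : (∑ p ∈ (Fintype.piFinset (fun _ : Fin 2 => Finset.range (n + 1))).filter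
      (fun p => (∀ i j : Fin 2, i < j → p j < p i) ∧ (∀ i, 1 ≤ p i) ∧
        ∑ i, p i = n),
    (1 / (((2:ℕ) : ℝ) * (((2:ℕ) : ℝ) + 1))) *
      ∏ i : Fin 2, ((((i : ℕ) : ℝ) + 2) / (((i : ℕ) : ℝ) + 1)) ^ p i)
      = ∑ k ∈ Finset.Icc 1 m, (1/6 : ℝ) * 2 ^ n * (3/4 : ℝ) ^ k := by
    refine Finset.sum_nbij' (i := fun p => p 1) (j := fun k => ![n - k, k]) ?_ ?_ ?_ ?_ ?_
    · intro p hp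
      simp only [Finset.mem_filter, Fintype.mem_piFinset, Finset.mem_range] at hp
      obtain ⟨hr, hlt, hpos, hsum⟩ := hp
      have h01 := hlt 0 1 (by norm_num)
      rw [Fin.sum_univ_two] at hsum
      simp only [Finset.mem_Icc]
      constructor
      · exact hpos 1
      · omega
    · intro k hk
      simp only [Finset.mem_Icc] at hk
      simp only [Finset.mem_filter, Fintype.mem_piFinset, Finset.mem_range]
      refine ⟨?_, ?_, ?_, ?_⟩
      · intro i
        fin_cases i <;> simp <;> omega
      · intro i j hij
        fin_cases i <;> fin_cases j <;> simp_all <;> omega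
      · intro i
        fin_cases i <;> simp <;> omega
      · rw [Fin.sum_univ_two]; simp; omega
    · intro p hp
      simp only [Finset.mem_filter, Fintype.mem_piFinset, Finset.mem_range] at hp
      obtain ⟨hr, hlt, hpos, hsum⟩ := hp
      rw [Fin.sum_univ_two] at hsum
      funext i
      fin_cases i <;> simp <;> omega
    · intro k hk
      simp
    · intro p hp
      simp only [Finset.mem_filter, Fintype.mem_piFinset, Finset.mem_range] at hp
      obtain ⟨hr, hlt, hpos, hsum⟩ := hp
      rw [Fin.sum_univ_two] at hsum
      have hp0 : p 0 = n - p 1 := by omega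
      have hle : p 1 ≤ n := by omega
      rw [Fin.prod_univ_two]
      have h2 : (2:ℝ)^(p 0) * (3/2)^(p 1) = 2^n * (3/4)^(p 1) := by
        rw [show (3/2 : ℝ) = 2 * (3/4) by norm_num, mul_pow, ← mul_assoc, ← pow_add, hsum]
      push_cast
      norm_num
      linear_combination (1/6 : ℝ) * h2
  rw [hbij]
  rw [← Finset.mul_sum]
  have hmr : ∑ k ∈ Finset.Icc 1 m, (3/4 : ℝ) ^ k
      = (∑ k ∈ Finset.range (m+1), (3/4 : ℝ) ^ k) - 1 := by
    have hins : Finset.range (m+1) = insert 0 (Finset.Icc 1 m) := by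
      ext x; simp only [Finset.mem_range, Finset.mem_insert, Finset.mem_Icc]; omega
    rw [hins, Finset.sum_insert (by simp)]
    ring
  rw [hmr, geom_sum_eq (by norm_num)]
  ring

theorem stmt_6 (n : ℕ) (hn : 1 ≤ n) :
    primeWeight 2 n =
        (1 / 2) * 2 ^ n - (2 / 3) * 2 ^ n * (3 / 4 : ℝ) ^ ((n - 1) / 2 + 1) ∧
      primeWeight 2 n ≥ (1 / 2) * 2 ^ n - (4 * Real.sqrt 3 / 9) * Real.sqrt 3 ^ n := by
  have hk := key n hn
  refine ⟨hk, ?_⟩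
  rw [hk]
  have hs : Real.sqrt 3 ^ 2 = 3 := Real.sq_sqrt (by norm_num)
  have hsn : (0:ℝ) ≤ Real.sqrt 3 := Real.sqrt_nonneg 3
  have main : (2/3 : ℝ) * 2^n * (3/4 : ℝ)^((n-1)/2+1) ≤ (4*Real.sqrt 3/9) * Real.sqrt 3 ^ n := by
    rcases Nat.even_or_odd n with ⟨a, ha⟩ | ⟨a, ha⟩
    · have ha1 : 1 ≤ a := by omega
      have ha2 : (n-1)/2+1 = a := by omega
      have eL : (2/3 : ℝ) * 2^n * (3/4 : ℝ)^((n-1)/2+1) = (2/3) * 3^a := by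
        rw [ha2, ha, pow_add, mul_assoc, mul_assoc, ← mul_pow, ← mul_pow]
        norm_num
      have eR : (4*Real.sqrt 3/9) * Real.sqrt 3 ^ n = (4*Real.sqrt 3/9) * 3^a := by
        rw [ha, pow_add, ← mul_pow, Real.mul_self_sqrt (by norm_num)]
      rw [eL, eR]
      have h3 : (0:ℝ) < 3^a := by positivity
      have hc : (2/3:ℝ) ≤ 4*Real.sqrt 3/9 := by nlinarith [hs, hsn]
      nlinarith
    · have ha2 : (n-1)/2+1 = a+1 := by omega
      have eL : (2/3 : ℝ) * 2^n * (3/4 : ℝ)^((n-1)/2+1) = 3^a := by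
        rw [ha2, ha, pow_succ, pow_succ, pow_mul]
        have e3 : ((2:ℝ)^2)^a*(3/4)^a = 3^a := by rw [← mul_pow]; norm_num
        linear_combination e3
      have eR : (4*Real.sqrt 3/9) * Real.sqrt 3 ^ n = (4/3) * 3^a := by
        rw [ha, pow_succ, pow_mul, hs]
        linear_combination (4/9 : ℝ) * (3:ℝ)^a * hs
      rw [eL, eR]
      have h3 : (0:ℝ) < 3^a := by positivity
      nlinarith
  linarith
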